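/- Let W ⊆ V_d be a P-submodule and suppose W(i) ≠ 0 for some 0 ≤ i < d. Write the p-adic expansion d − i = t_0 + t_1 p + ⋯ + t_m p^m with 0 ≤ t_j ≤ p−1. Then the subspace S^{t_0}(V_1)·F^{*}(S^{t_1}(V_1))·⋯·F^{m*}(S^{t_m}(V_1)) ⊗ z^i, i.e. the span of all products f_0·f_1^p·⋯·f_m^{p^m}·z^i with f_j ∈ S^{t_j}(V_1), is contained in W. -/

import Mathlib

/-!
The `P`-module `V_d` underlying the syzygy bundle on `P^n_k` (Trivedi).
`G = GL_{n+1}(k)` and `P ⊂ G` is the maximal parabolic subgroup (block upper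
triangular with blocks of sizes `1` and `n`) with `G/P ≅ P^n_k`; homogeneous
`G`-bundles on `P^n_k` correspond to finite dimensional `P`-modules.  Writing
`U₁` for the `k`-vector space with basis `x₁, …, x_n, z` (here the variables of
`MvPolynomial (Fin (n+1)) k`, with `z` the last variable) and
`V₁ = span(x₁, …, x_n)`, the group `P` acts on `U₁` by linear substitutions
preserving `V₁`, and hence on the degree-`d` polynomials `U_d = S^d(U₁)`.  The
`P`-module corresponding to the syzygy bundle `V_d` is
`V_d = ⊕_{i=0}^{d−1} S^{d−i}(V₁) ⊗ zⁱ ⊂ U_d`.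
-/

noncomputable section

open MvPolynomial

/-- The `P`-module `V_d = ⊕_{i=0}^{d-1} S^{d-i}(V₁)·zⁱ`: polynomials in
`x₁, …, x_n, z` all of whose monomials have total degree `d` and `z`-exponent
`< d`. -/
def VdMod (k : Type) [Field k] (n d : ℕ) :
    Submodule k (MvPolynomial (Fin (n + 1)) k) where
  carrier := {f | ∀ m ∈ f.support, (∑ j, m j) = d ∧ m (Fin.last n) < d}
  add_mem' := by
    intro f g hf hg m hm
    rcases Finset.mem_union.mp (MvPolynomial.support_add hm) with h | h
    · exact hf m h
    · exact hg m h
  zero_mem' := by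
    intro m hm
    simp at hm
  smul_mem' := by
    intro c f hf m hm
    exact hf m (MvPolynomial.support_smul hm)

/-- The subspace `(⋯)·zⁱ` of polynomials all of whose monomials have
`z`-exponent exactly `i`; thus `W ⊓ zSlice k n i` is the component
`W(i) = W ∩ (S^{d-i}(V₁) ⊗ zⁱ)` of a submodule `W ≤ V_d`. -/
def zSlice (k : Type) [Field k] (n i : ℕ) :
    Submodule k (MvPolynomial (Fin (n + 1)) k) where
  carrier := {f | ∀ m ∈ f.support, m (Fin.last n) = i}
  add_mem' := by
    intro f g hf hg m hm
    rcases Finset.mem_union.mp (MvPolynomial.support_add hm) with h | h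
    · exact hf m h
    · exact hg m h
  zero_mem' := by
    intro m hm
    simp at hm
  smul_mem' := by
    intro c f hf m hm
    exact hf m (MvPolynomial.support_smul hm)

/-- A matrix `M ∈ GL_{n+1}(k)` lies in (the image in `GL(U₁)` of) the maximal
parabolic `P` iff it is invertible and each `x`-variable is mapped into the span
of the `x`-variables (the substitution sends `X i ↦ ∑ j, M i j • X j`, so this
says `M i z = 0` for every `x`-index `i`); `z` itself may be sent to
`b·z + a₁x₁ + ⋯ + a_nx_n` with `b ≠ 0`. -/
def IsParabolicSubst {k : Type} [Field k] {n : ℕ}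
    (M : Matrix (Fin (n + 1)) (Fin (n + 1)) k) : Prop :=
  IsUnit M.det ∧ ∀ i : Fin (n + 1), i ≠ Fin.last n → M i (Fin.last n) = 0

/-- The algebra endomorphism of `k[x₁, …, x_n, z]` induced by the linear
substitution `X i ↦ ∑ j, M i j • X j`. -/
def substMap {k : Type} [Field k] {n : ℕ}
    (M : Matrix (Fin (n + 1)) (Fin (n + 1)) k) :
    MvPolynomial (Fin (n + 1)) k →ₐ[k] MvPolynomial (Fin (n + 1)) k :=
  MvPolynomial.aeval fun i => ∑ j, M i j • MvPolynomial.X j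

/-- `W` is a `P`-submodule of `V_d`: a `k`-subspace of `V_d` stable under all
parabolic substitutions. -/
def IsPSubmodule {k : Type} [Field k] {n : ℕ} (d : ℕ)
    (W : Submodule k (MvPolynomial (Fin (n + 1)) k)) : Prop :=
  W ≤ VdMod k n d ∧
    ∀ M : Matrix (Fin (n + 1)) (Fin (n + 1)) k,
      IsParabolicSubst M → ∀ f ∈ W, substMap M f ∈ W

/-- The `j`-th digit of the `p`-adic expansion of `i`. -/
def pDigit (p j i : ℕ) : ℕ := i / p ^ j % p

/-- `f` lies in `S^t(V₁)`: it is a polynomial in the `x`-variables only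
(no `z`), homogeneous of degree `t`. -/
def IsXHomog {k : Type} [Field k] {n : ℕ} (t : ℕ)
    (f : MvPolynomial (Fin (n + 1)) k) : Prop :=
  ∀ m ∈ f.support, m (Fin.last n) = 0 ∧ (∑ j, m j) = t


open Polynomial in
theorem lucas_step' {p : ℕ} (hp : p.Prime) (n k : ℕ) :
    (n.choose k : ZMod p) = (n % p).choose (k % p) * (n / p).choose (k / p) := by
  haveI : Fact p.Prime := ⟨hp⟩
  have hX : ((Polynomial.X + 1 : (ZMod p)[X]) ^ n).coeff k = (n.choose k : ZMod p) :=
    Polynomial.coeff_X_add_one_pow _ n k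
  rw [← hX]
  have hexp : (Polynomial.expand (ZMod p) p ((Polynomial.X + 1 : (ZMod p)[X]) ^ (n / p)))
      = ((Polynomial.X + 1 : (ZMod p)[X]) ^ p) ^ (n / p) := by
    rw [map_pow, map_add, Polynomial.expand_X, map_one, add_pow_char Polynomial.X 1 p, one_pow]
  have hdecomp : (Polynomial.X + 1 : (ZMod p)[X]) ^ n
      = (Polynomial.expand (ZMod p) p ((Polynomial.X + 1) ^ (n / p))) * (Polynomial.X + 1) ^ (n % p) := by
    rw [hexp, ← pow_mul, ← pow_add, Nat.div_add_mod]
  rw [hdecomp, Polynomial.coeff_mul]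
  rw [Finset.sum_eq_single_of_mem (p * (k / p), k % p)
      (Finset.HasAntidiagonal.mem_antidiagonal.mpr (by exact (Nat.div_add_mod k p)))]
  · rw [Polynomial.coeff_expand hp.pos]
    simp only [if_pos (Dvd.intro _ rfl), Nat.mul_div_cancel_left _ hp.pos,
      Polynomial.coeff_X_add_one_pow]
    ring
  · rintro ⟨u, v⟩ hmem hne
    rw [Finset.HasAntidiagonal.mem_antidiagonal] at hmem
    rw [Polynomial.coeff_expand hp.pos]
    by_cases hdvd : p ∣ u
    · obtain ⟨c, rfl⟩ := hdvd
      simp only [if_pos (Dvd.intro _ rfl)]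
      have hv : ¬ v ≤ n % p := by
        intro hle
        have hvp : v < p := lt_of_le_of_lt hle (Nat.mod_lt n hp.pos)
        apply hne
        simp only at hmem
        have hk1 : k % p = v := by
          rw [← hmem, Nat.mul_add_mod, Nat.mod_eq_of_lt hvp]
        have hk2 : k / p = c := by
          rw [← hmem, Nat.mul_add_div hp.pos, Nat.div_eq_of_lt hvp, add_zero]
        simp [hk1, hk2]
      simp only [Polynomial.coeff_X_add_one_pow]
      rw [Nat.choose_eq_zero_of_lt (show n % p < v by omega), Nat.cast_zero, mul_zero]
    · rw [if_neg hdvd, zero_mul]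

theorem lucas_digit' {p : ℕ} (hp : p.Prime) :
    ∀ (M : ℕ) (d : ℕ → ℕ) (j0 s : ℕ), (∀ j, j < M → d j < p) → j0 < M → s ≤ d j0 →
      ¬ p ∣ (∑ j ∈ Finset.range M, p ^ j * d j).choose (p ^ j0 * s) := by
  intro M
  induction M with
  | zero => intro d j0 s _ h; omega
  | succ M ih =>
    intro d j0 s hd hj0 hs
    have hN : ∑ j ∈ Finset.range (M + 1), p ^ j * d j
        = p * (∑ j ∈ Finset.range M, p ^ j * d (j + 1)) + d 0 := by
      rw [Finset.sum_range_succ']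
      rw [Finset.mul_sum]
      congr 1
      · apply Finset.sum_congr rfl
        intro j _
        ring
      · simp
    rw [← ZMod.natCast_eq_zero_iff]
    set N' := ∑ j ∈ Finset.range M, p ^ j * d (j + 1) with hN'
    have hd0 : d 0 < p := hd 0 (Nat.succ_pos M)
    have hmod : (∑ j ∈ Finset.range (M + 1), p ^ j * d j) % p = d 0 := by
      rw [hN, Nat.mul_add_mod, Nat.mod_eq_of_lt hd0]
    have hdiv : (∑ j ∈ Finset.range (M + 1), p ^ j * d j) / p = N' := by
      rw [hN, Nat.mul_add_div hp.pos, Nat.div_eq_of_lt hd0, add_zero]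
    rw [lucas_step' hp, hmod, hdiv]
    cases j0 with
    | zero =>
      have hsp : s < p := lt_of_le_of_lt hs hd0
      rw [pow_zero, one_mul, Nat.mod_eq_of_lt hsp, Nat.div_eq_of_lt hsp, Nat.choose_zero_right,
        Nat.cast_one, mul_one]
      intro h0
      rw [ZMod.natCast_eq_zero_iff] at h0
      have h1 : (d 0).choose s ∣ Nat.factorial (d 0) :=
        ⟨Nat.factorial s * Nat.factorial (d 0 - s), by
          rw [← Nat.choose_mul_factorial_mul_factorial hs, mul_assoc]⟩
      have h2 : p ∣ Nat.factorial (d 0) := dvd_trans h0 h1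
      rw [Nat.Prime.dvd_factorial hp] at h2
      omega
    | succ j0' =>
      have ht : p ^ (j0' + 1) * s = p * (p ^ j0' * s) := by ring
      rw [ht, Nat.mul_mod_right, Nat.mul_div_cancel_left _ hp.pos, Nat.choose_zero_right,
        Nat.cast_one, one_mul]
      have := ih (fun j => d (j + 1)) j0' s (fun j hj => hd (j + 1) (by omega)) (by omega) hs
      rw [← ZMod.natCast_eq_zero_iff] at this
      exact this

theorem digit_sum_mod {p : ℕ} : ∀ (M e : ℕ),
    ∑ j ∈ Finset.range M, p ^ j * (e / p ^ j % p) = e % p ^ M := by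
  intro M
  induction M with
  | zero => intro e; simp [Nat.mod_one]
  | succ M ih =>
    intro e
    rw [Finset.sum_range_succ, ih, Nat.mod_pow_succ]

theorem digit_sum_eq {p : ℕ} (M e : ℕ) (he : e < p ^ M) :
    ∑ j ∈ Finset.range M, p ^ j * (e / p ^ j % p) = e := by
  rw [digit_sum_mod, Nat.mod_eq_of_lt he]

section Extraction

variable {k : Type} [Field k] {n : ℕ}

theorem exists_lambda [Infinite k] (m m' : Fin (n + 1) →₀ ℕ) (h : m ≠ m') :
    ∃ lam : Fin (n + 1) → k, (∀ j, lam j ≠ 0) ∧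
      (∏ j, lam j ^ m j) ≠ (∏ j, lam j ^ m' j) := by
  obtain ⟨j0, hj0⟩ : ∃ j0, m j0 ≠ m' j0 := by
    by_contra hc
    push_neg at hc
    exact h (Finsupp.ext hc)
  set a := m j0
  set b := m' j0
  have hq : (Polynomial.X ^ a - Polynomial.X ^ b : Polynomial k) ≠ 0 := by
    intro h0
    have h1 : Polynomial.coeff (Polynomial.X ^ a - Polynomial.X ^ b : Polynomial k) a = 1 := by
      rw [Polynomial.coeff_sub, Polynomial.coeff_X_pow, Polynomial.coeff_X_pow,
        if_pos rfl, if_neg (fun hab : a = b => hj0 hab), sub_zero]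
    rw [h0] at h1
    simp at h1
  have hfin : ({x | Polynomial.IsRoot (Polynomial.X ^ a - Polynomial.X ^ b : Polynomial k) x}
      ∪ {0}).Finite :=
    Set.Finite.union (Polynomial.finite_setOf_isRoot hq) (Set.finite_singleton 0)
  obtain ⟨t, ht⟩ := hfin.infinite_compl.nonempty
  simp only [Set.mem_compl_iff, Set.mem_union, Set.mem_setOf_eq, Set.mem_singleton_iff,
    not_or] at ht
  obtain ⟨hroot, ht0⟩ := ht
  have htab : t ^ a ≠ t ^ b := by
    intro hab
    exact hroot (by simp [Polynomial.IsRoot, hab])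
  refine ⟨fun j => if j = j0 then t else 1, fun j => by
    by_cases hj : j = j0 <;> simp [hj, ht0], ?_⟩
  have key : ∀ m'' : Fin (n + 1) →₀ ℕ,
      (∏ j, (if j = j0 then t else 1) ^ m'' j) = t ^ m'' j0 := by
    intro m''
    rw [Fintype.prod_eq_single j0 (fun x hx => by simp [hx])]
    simp
  rw [key, key]
  exact htab

theorem isParabolic_diagonal (lam : Fin (n + 1) → k) (hlam : ∀ j, lam j ≠ 0) :
    IsParabolicSubst (Matrix.diagonal lam) := by
  constructor
  · rw [Matrix.det_diagonal]
    exact (Finset.prod_ne_zero_iff.mpr fun j _ => hlam j).isUnit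
  · intro i hi
    exact Matrix.diagonal_apply_ne lam hi

theorem substMap_diagonal_monomial (lam : Fin (n + 1) → k) (m : Fin (n + 1) →₀ ℕ) (c : k) :
    substMap (Matrix.diagonal lam) (monomial m c)
      = (∏ j, lam j ^ m j) • monomial m c := by
  rw [substMap, aeval_monomial]
  have hfun : ∀ i : Fin (n + 1),
      (∑ j, Matrix.diagonal lam i j • (X j : MvPolynomial (Fin (n + 1)) k)) = lam i • X i := by
    intro i
    rw [Fintype.sum_eq_single i (fun j hj => by
      rw [Matrix.diagonal_apply_ne' lam hj, zero_smul])]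
    rw [Matrix.diagonal_apply_eq]
  simp only [hfun]
  have : (m.prod fun i e => (lam i • (X i : MvPolynomial (Fin (n + 1)) k)) ^ e)
      = C (∏ j ∈ m.support, lam j ^ m j) * m.prod fun i e => (X i : MvPolynomial (Fin (n + 1)) k) ^ e := by
    rw [Finsupp.prod, Finsupp.prod]
    calc ∏ a ∈ m.support, (lam a • (X a : MvPolynomial (Fin (n + 1)) k)) ^ m a
        = ∏ a ∈ m.support, (C (lam a ^ m a) * (X a : MvPolynomial (Fin (n + 1)) k) ^ m a) := by
          apply Finset.prod_congr rfl
          intro j _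
          rw [smul_pow, smul_eq_C_mul]
      _ = (∏ a ∈ m.support, C (lam a ^ m a)) * ∏ a ∈ m.support, (X a : MvPolynomial (Fin (n + 1)) k) ^ m a :=
          Finset.prod_mul_distrib
      _ = _ := by rw [map_prod]
  rw [this]
  have hprod : (∏ j ∈ m.support, lam j ^ m j) = ∏ j, lam j ^ m j := by
    apply Finset.prod_subset (Finset.subset_univ _)
    intro j _ hj
    rw [Finsupp.notMem_support_iff.mp hj, pow_zero]
  rw [hprod, monomial_eq, smul_eq_C_mul, algebraMap_eq]
  ring

theorem substMap_diagonal_coeff (lam : Fin (n + 1) → k) (f : MvPolynomial (Fin (n + 1)) k)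
    (m : Fin (n + 1) →₀ ℕ) :
    coeff m (substMap (Matrix.diagonal lam) f) = (∏ j, lam j ^ m j) * coeff m f := by
  conv_lhs => rw [f.as_sum, map_sum]
  rw [coeff_sum]
  simp only [substMap_diagonal_monomial, coeff_smul, coeff_monomial, smul_eq_mul]
  by_cases hm : m ∈ f.support
  · rw [Finset.sum_eq_single_of_mem m hm (fun m' _ hne => by rw [if_neg hne, mul_zero]), if_pos rfl]
  · rw [Finset.sum_eq_zero, MvPolynomial.notMem_support_iff.mp hm, mul_zero]
    intro m' hm'
    rw [if_neg (fun (he : m' = m) => hm (he ▸ hm')), mul_zero]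

/-- Monomial extraction: every monomial of an element of a `P`-stable subspace lies in it. -/
theorem extract_monomial [Infinite k]
    {W : Submodule k (MvPolynomial (Fin (n + 1)) k)}
    (hW2 : ∀ M : Matrix (Fin (n + 1)) (Fin (n + 1)) k,
      IsParabolicSubst M → ∀ f ∈ W, substMap M f ∈ W) :
    ∀ (N : ℕ) (f : MvPolynomial (Fin (n + 1)) k), f ∈ W → f.support.card ≤ N →
      ∀ m ∈ f.support, monomial m 1 ∈ W := by
  intro N
  induction N with
  | zero =>
    intro f _ hcard m hm
    rw [Nat.le_zero, Finset.card_eq_zero] at hcard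
    rw [hcard] at hm
    exact absurd hm (Finset.notMem_empty m)
  | succ N ih =>
    intro f hf hcard m hm
    by_cases hone : ∀ m' ∈ f.support, m' = m
    · have hfm : f = monomial m (coeff m f) := by
        conv_lhs => rw [f.as_sum]
        rw [Finset.sum_eq_single_of_mem m hm (fun m' hm' hne => absurd (hone m' hm') hne)]
      have hc : coeff m f ≠ 0 := mem_support_iff.mp hm
      set c := coeff m f with hcdef
      have : monomial m (1 : k) = c⁻¹ • f := by
        conv_rhs => rw [hfm]
        rw [smul_monomial, smul_eq_mul, inv_mul_cancel₀ hc]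
      rw [this]
      exact W.smul_mem _ hf
    · push_neg at hone
      obtain ⟨m', hm', hne⟩ := hone
      obtain ⟨lam, hlam, hdiff⟩ := exists_lambda (k := k) m m' (fun he => hne he.symm)
      set Lam : (Fin (n + 1) →₀ ℕ) → k := fun m'' => ∏ j, lam j ^ m'' j with hLam
      set g2 := substMap (Matrix.diagonal lam) f - (Lam m') • f with hg2
      have hg2W : g2 ∈ W :=
        W.sub_mem (hW2 _ (isParabolic_diagonal lam hlam) f hf) (W.smul_mem _ hf)
      have hcoeff : ∀ m'', coeff m'' g2 = (Lam m'' - Lam m') * coeff m'' f := by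
        intro m''
        rw [hg2, coeff_sub, substMap_diagonal_coeff, coeff_smul, smul_eq_mul, sub_mul]
      have hsub : g2.support ⊆ f.support.erase m' := by
        intro m'' hmem
        rw [Finset.mem_erase]
        rw [mem_support_iff, hcoeff] at hmem
        constructor
        · intro he
          apply hmem
          rw [he, sub_self, zero_mul]
        · rw [mem_support_iff]
          intro h0
          apply hmem
          rw [h0, mul_zero]
      have hmg2 : m ∈ g2.support := by
        rw [mem_support_iff, hcoeff]
        exact mul_ne_zero (sub_ne_zero_of_ne hdiff) (mem_support_iff.mp hm)
      refine ih g2 hg2W ?_ m hmg2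
      have h1 := Finset.card_le_card hsub
      rw [Finset.card_erase_of_mem hm'] at h1
      omega

theorem isParabolic_transvection (a b : Fin (n + 1)) (hab : a ≠ b) (hb : b ≠ Fin.last n)
    (c : k) : IsParabolicSubst (Matrix.transvection a b c) := by
  constructor
  · rw [Matrix.det_transvection_of_ne a b hab]
    exact isUnit_one
  · intro i hi
    rw [Matrix.transvection, Matrix.add_apply, Matrix.one_apply_ne hi,
      Matrix.single_apply_of_ne a b c i (Fin.last n) (fun h => hb h.2), add_zero]

theorem substMap_transvection_X (a b : Fin (n + 1)) (c : k) (i : Fin (n + 1)) :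
    substMap (Matrix.transvection a b c) (X i)
      = if i = a then X a + c • X b else X i := by
  rw [substMap, aeval_X]
  have expand : ∀ j, Matrix.transvection a b c i j •
      (X j : MvPolynomial (Fin (n + 1)) k)
      = (1 : Matrix (Fin (n + 1)) (Fin (n + 1)) k) i j • X j
        + Matrix.single a b c i j • X j := by
    intro j
    rw [Matrix.transvection, Matrix.add_apply, add_smul]
  simp only [expand]
  rw [Finset.sum_add_distrib]
  have h1 : (∑ j, (1 : Matrix (Fin (n + 1)) (Fin (n + 1)) k) i j •
      (X j : MvPolynomial (Fin (n + 1)) k)) = X i := by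
    rw [Fintype.sum_eq_single i (fun j hj => by
      rw [Matrix.one_apply_ne (Ne.symm hj), zero_smul])]
    rw [Matrix.one_apply_eq, one_smul]
  rw [h1]
  by_cases hia : i = a
  · rw [if_pos hia, hia]
    congr 1
    rw [Fintype.sum_eq_single b (fun j hj => by
      rw [Matrix.single_apply_of_ne a b c a j (fun h => hj h.2.symm), zero_smul])]
    rw [Matrix.single_apply_same a b c]
  · rw [if_neg hia]
    rw [Finset.sum_eq_zero (fun j _ => by
      rw [Matrix.single_apply_of_ne a b c i j (fun h => hia h.1.symm), zero_smul])]
    rw [add_zero]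

theorem substMap_transvection_fixed (a b : Fin (n + 1)) (c : k) (m' : Fin (n + 1) →₀ ℕ)
    (hma : m' a = 0) :
    substMap (Matrix.transvection a b c) (monomial m' (1 : k)) = monomial m' 1 := by
  rw [monomial_eq, map_one, one_mul, Finsupp.prod, map_prod]
  apply Finset.prod_congr rfl
  intro i hi
  have hia : i ≠ a := fun he => by
    rw [he] at hi
    exact Finsupp.notMem_support_iff.mpr hma hi
  rw [map_pow, substMap_transvection_X, if_neg hia]

theorem substMap_transvection_monomial (a b : Fin (n + 1)) (hab : a ≠ b)
    (m : Fin (n + 1) →₀ ℕ) :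
    substMap (Matrix.transvection a b (1 : k)) (monomial m (1 : k))
      = ∑ s ∈ Finset.range (m a + 1), ((m a).choose s : k) •
          monomial (Finsupp.single a s + (Finsupp.single b (m a - s) + m.erase a)) 1 := by
  have hsplit : monomial m (1 : k) = X a ^ (m a) * monomial (Finsupp.erase a m) 1 := by
    rw [X_pow_eq_monomial, monomial_mul, one_mul, Finsupp.single_add_erase]
  rw [hsplit, map_mul, map_pow, substMap_transvection_X, if_pos rfl,
    substMap_transvection_fixed a b _ _ (Finsupp.erase_same), one_smul, add_pow,
    Finset.sum_mul]
  apply Finset.sum_congr rfl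
  intro s hs
  have : (X a : MvPolynomial (Fin (n + 1)) k) ^ s * X b ^ (m a - s) * ((m a).choose s :
        MvPolynomial (Fin (n + 1)) k) * monomial (m.erase a) 1
      = ((m a).choose s : MvPolynomial (Fin (n + 1)) k) *
        (X a ^ s * (X b ^ (m a - s) * monomial (m.erase a) 1)) := by ring
  rw [this, X_pow_eq_monomial, X_pow_eq_monomial, monomial_mul, monomial_mul, one_mul,
    smul_eq_C_mul, map_natCast]
  norm_num

theorem move_monomial [Infinite k] {p : ℕ} [CharP k p] (hp : p.Prime)
    {W : Submodule k (MvPolynomial (Fin (n + 1)) k)}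
    (hW2 : ∀ M : Matrix (Fin (n + 1)) (Fin (n + 1)) k,
      IsParabolicSubst M → ∀ f ∈ W, substMap M f ∈ W)
    (a b : Fin (n + 1)) (hab : a ≠ b) (hb : b ≠ Fin.last n)
    (m : Fin (n + 1) →₀ ℕ) (hm : monomial m (1 : k) ∈ W) (s : ℕ) (hs : s ≤ m a)
    (hchoose : ¬ p ∣ (m a).choose s) :
    monomial (Finsupp.single a s + (Finsupp.single b (m a - s) + m.erase a)) (1 : k) ∈ W := by
  have hsub := hW2 _ (isParabolic_transvection a b hab hb 1) _ hm
  rw [substMap_transvection_monomial a b hab] at hsub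
  refine extract_monomial hW2 _ _ hsub le_rfl _ ?_
  rw [mem_support_iff, coeff_sum]
  rw [Finset.sum_eq_single_of_mem s (Finset.mem_range.mpr (by omega))]
  · rw [coeff_smul, coeff_monomial, if_pos rfl, smul_eq_mul, mul_one]
    intro h0
    exact hchoose ((CharP.cast_eq_zero_iff k p _).mp h0)
  · intro s' _ hne
    rw [coeff_smul, coeff_monomial, if_neg, smul_zero]
    intro he
    apply hne
    have := congrArg (fun m'' : Fin (n + 1) →₀ ℕ => m'' a) he
    have hba : b ≠ a := fun h => hab h.symm
    simpa [Finsupp.single_apply, if_neg hba, Finsupp.erase_same] using this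

theorem concentrate [Infinite k] {p : ℕ} [CharP k p] (hp : p.Prime)
    {W : Submodule k (MvPolynomial (Fin (n + 1)) k)}
    (hW2 : ∀ M : Matrix (Fin (n + 1)) (Fin (n + 1)) k,
      IsParabolicSubst M → ∀ f ∈ W, substMap M f ∈ W)
    (h0L : (0 : Fin (n + 1)) ≠ Fin.last n) :
    ∀ (N : ℕ) (m : Fin (n + 1) →₀ ℕ),
      (∑ j ∈ (Finset.univ.erase (Fin.last n)).erase 0, m j) ≤ N →
      monomial m (1 : k) ∈ W →
      monomial (Finsupp.single 0 (∑ j ∈ Finset.univ.erase (Fin.last n), m j)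
        + Finsupp.single (Fin.last n) (m (Fin.last n))) (1 : k) ∈ W := by
  intro N
  induction N with
  | zero =>
    intro m hsum hm
    have hz : ∀ u ∈ (Finset.univ.erase (Fin.last n)).erase 0, m u = 0 := by
      intro u hu
      by_contra h0
      have : m u ≤ ∑ j ∈ (Finset.univ.erase (Fin.last n)).erase 0, m j :=
        Finset.single_le_sum (fun j _ => Nat.zero_le _) hu
      omega
    have h0mem : (0 : Fin (n + 1)) ∈ Finset.univ.erase (Fin.last n) :=
      Finset.mem_erase.mpr ⟨h0L, Finset.mem_univ _⟩
    have hsum0 : ∑ j ∈ Finset.univ.erase (Fin.last n), m j = m 0 := by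
      rw [← Finset.sum_erase_add _ _ h0mem]
      rw [Finset.sum_eq_zero hz, zero_add]
    have heq : Finsupp.single (0 : Fin (n + 1)) (∑ j ∈ Finset.univ.erase (Fin.last n), m j)
        + Finsupp.single (Fin.last n) (m (Fin.last n)) = m := by
      ext j
      rw [Finsupp.add_apply, hsum0, Finsupp.single_apply, Finsupp.single_apply]
      by_cases hj0 : (0 : Fin (n + 1)) = j
      · rw [if_pos hj0, if_neg (fun h : Fin.last n = j => h0L (hj0.trans h.symm)), ← hj0, add_zero]
      · rw [if_neg hj0]
        by_cases hjL : Fin.last n = j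
        · rw [if_pos hjL, ← hjL, zero_add]
        · rw [if_neg hjL, add_zero]
          exact (hz j (Finset.mem_erase.mpr ⟨fun h => hj0 h.symm,
            Finset.mem_erase.mpr ⟨fun h => hjL h.symm, Finset.mem_univ _⟩⟩)).symm
    rw [heq]
    exact hm
  | succ N ih =>
    intro m hsum hm
    by_cases hle : (∑ j ∈ (Finset.univ.erase (Fin.last n)).erase 0, m j) ≤ N
    · exact ih m hle hm
    · have hne : (∑ j ∈ (Finset.univ.erase (Fin.last n)).erase 0, m j) ≠ 0 := by omega
      obtain ⟨u, hu, hmu⟩ := Finset.exists_ne_zero_of_sum_ne_zero hne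
      have hu0 : u ≠ 0 := (Finset.mem_erase.mp hu).1
      have huL : u ≠ Fin.last n := (Finset.mem_erase.mp (Finset.mem_erase.mp hu).2).1
      have hmove := move_monomial hp hW2 u 0 hu0 h0L m hm 0 (Nat.zero_le _)
        (by rw [Nat.choose_zero_right]; exact fun h => hp.ne_one (Nat.dvd_one.mp h))
      have hm1eq : Finsupp.single u 0 + (Finsupp.single (0 : Fin (n + 1)) (m u - 0) + m.erase u)
          = Finsupp.single (0 : Fin (n + 1)) (m u) + m.erase u := by
        rw [Finsupp.single_zero, zero_add, Nat.sub_zero]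
      rw [hm1eq] at hmove
      set m₁ : Fin (n + 1) →₀ ℕ := Finsupp.single (0 : Fin (n + 1)) (m u) + m.erase u with hm₁
      have hL0 : Fin.last n ≠ 0 := fun h => h0L h.symm
      have hval : ∀ j, j ≠ 0 → j ≠ u → m₁ j = m j := by
        intro j hj0 hju
        rw [hm₁, Finsupp.add_apply, Finsupp.single_apply,
          if_neg (fun h => hj0 h.symm), Finsupp.erase_ne hju, zero_add]
      have hvalu : m₁ u = 0 := by
        rw [hm₁, Finsupp.add_apply, Finsupp.single_apply, if_neg (fun h => hu0 h.symm),
          Finsupp.erase_same, add_zero]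
      have hval0 : m₁ 0 = m u + m 0 := by
        rw [hm₁, Finsupp.add_apply, Finsupp.single_apply, if_pos rfl,
          Finsupp.erase_ne (Ne.symm hu0)]
      have huS : u ∈ Finset.univ.erase (Fin.last n) :=
        Finset.mem_erase.mpr ⟨huL, Finset.mem_univ _⟩
      have h0S : (0 : Fin (n + 1)) ∈ (Finset.univ.erase (Fin.last n)).erase u :=
        Finset.mem_erase.mpr ⟨Ne.symm hu0, Finset.mem_erase.mpr ⟨h0L, Finset.mem_univ _⟩⟩
      have hsplitE_m : ∑ j ∈ (Finset.univ.erase (Fin.last n)).erase 0, m j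
          = (∑ j ∈ ((Finset.univ.erase (Fin.last n)).erase 0).erase u, m j) + m u :=
        (Finset.sum_erase_add _ _ hu).symm
      have hsplitE_m1 : ∑ j ∈ (Finset.univ.erase (Fin.last n)).erase 0, m₁ j
          = (∑ j ∈ ((Finset.univ.erase (Fin.last n)).erase 0).erase u, m₁ j) + m₁ u :=
        (Finset.sum_erase_add _ _ hu).symm
      have hcongE : ∑ j ∈ ((Finset.univ.erase (Fin.last n)).erase 0).erase u, m₁ j
          = ∑ j ∈ ((Finset.univ.erase (Fin.last n)).erase 0).erase u, m j := by
        apply Finset.sum_congr rfl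
        intro j hj
        exact hval j (Finset.mem_erase.mp (Finset.mem_erase.mp hj).2).1
          (Finset.mem_erase.mp hj).1
      have hbound : ∑ j ∈ (Finset.univ.erase (Fin.last n)).erase 0, m₁ j ≤ N := by
        rw [hsplitE_m1, hcongE, hvalu]
        omega
      have hib := ih m₁ hbound hmove
      have hfinal1 : m₁ (Fin.last n) = m (Fin.last n) := hval _ hL0 (fun h => huL h.symm)
      have hSm : ∑ j ∈ Finset.univ.erase (Fin.last n), m j
          = (∑ j ∈ ((Finset.univ.erase (Fin.last n)).erase u).erase 0, m j) + m 0 + m u := by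
        rw [← Finset.sum_erase_add _ _ huS, ← Finset.sum_erase_add _ _ h0S]
      have hSm1 : ∑ j ∈ Finset.univ.erase (Fin.last n), m₁ j
          = (∑ j ∈ ((Finset.univ.erase (Fin.last n)).erase u).erase 0, m₁ j)
            + m₁ 0 + m₁ u := by
        rw [← Finset.sum_erase_add _ _ huS, ← Finset.sum_erase_add _ _ h0S]
      have hcongS : ∑ j ∈ ((Finset.univ.erase (Fin.last n)).erase u).erase 0, m₁ j
          = ∑ j ∈ ((Finset.univ.erase (Fin.last n)).erase u).erase 0, m j := by
        apply Finset.sum_congr rfl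
        intro j hj
        exact hval j (Finset.mem_erase.mp hj).1
          (Finset.mem_erase.mp (Finset.mem_erase.mp hj).2).1
      have hfinal2 : ∑ j ∈ Finset.univ.erase (Fin.last n), m₁ j
          = ∑ j ∈ Finset.univ.erase (Fin.last n), m j := by
        rw [hSm1, hSm, hcongS, hvalu, hval0]
        omega
      rw [hfinal2, hfinal1] at hib
      exact hib

theorem sum_smul_apply (M' : ℕ) (b : ℕ → (Fin (n + 1) →₀ ℕ)) (p : ℕ) (u : Fin (n + 1)) :
    (∑ j ∈ Finset.range M', p ^ j • b j) u = ∑ j ∈ Finset.range M', p ^ j * b j u := by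
  rw [Finsupp.finset_sum_apply]
  apply Finset.sum_congr rfl
  intro j _
  rw [Finsupp.smul_apply, smul_eq_mul]

theorem distribute [Infinite k] {p : ℕ} [CharP k p] (hp : p.Prime)
    {W : Submodule k (MvPolynomial (Fin (n + 1)) k)}
    (hW2 : ∀ M : Matrix (Fin (n + 1)) (Fin (n + 1)) k,
      IsParabolicSubst M → ∀ f ∈ W, substMap M f ∈ W)
    (h0L : (0 : Fin (n + 1)) ≠ Fin.last n)
    (e i M : ℕ) (he : e < p ^ M)
    (hconc : monomial (Finsupp.single (0 : Fin (n + 1)) e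
      + Finsupp.single (Fin.last n) i) (1 : k) ∈ W) :
    ∀ (N : ℕ) (a : ℕ → (Fin (n + 1) →₀ ℕ)),
      (∀ j, j < M → (a j) (Fin.last n) = 0 ∧ (∑ u, a j u) = pDigit p j e) →
      (∑ j ∈ Finset.range M, ∑ u ∈ Finset.univ.erase 0, a j u) ≤ N →
      monomial ((∑ j ∈ Finset.range M, p ^ j • a j)
        + Finsupp.single (Fin.last n) i) (1 : k) ∈ W := by
  have hL0 : Fin.last n ≠ 0 := fun h => h0L h.symm
  intro N
  induction N with
  | zero =>
    intro a ha hsum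
    have hz : ∀ j ∈ Finset.range M, ∀ u ∈ Finset.univ.erase 0, a j u = 0 := by
      intro j hj u hu
      by_contra h0
      have h1 : a j u ≤ ∑ u' ∈ Finset.univ.erase 0, a j u' :=
        Finset.single_le_sum (fun _ _ => Nat.zero_le _) hu
      have h2 : (∑ u' ∈ Finset.univ.erase 0, a j u') ≤
          ∑ j' ∈ Finset.range M, ∑ u' ∈ Finset.univ.erase 0, a j' u' :=
        Finset.single_le_sum (f := fun j' => ∑ u' ∈ Finset.univ.erase 0, a j' u')
          (fun _ _ => Nat.zero_le _) hj
      omega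
    have haj : ∀ j ∈ Finset.range M, p ^ j • a j
        = Finsupp.single (0 : Fin (n + 1)) (p ^ j * pDigit p j e) := by
      intro j hj
      have h0 : a j 0 = pDigit p j e := by
        have hsplit : (∑ u ∈ Finset.univ.erase 0, a j u) + a j 0 = ∑ u, a j u :=
          Finset.sum_erase_add _ _ (Finset.mem_univ _)
        rw [Finset.sum_eq_zero (hz j hj), zero_add] at hsplit
        rw [hsplit, (ha j (Finset.mem_range.mp hj)).2]
      have : a j = Finsupp.single (0 : Fin (n + 1)) (pDigit p j e) := by
        ext u
        by_cases hu : u = 0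
        · rw [hu, h0, Finsupp.single_eq_same]
        · rw [hz j hj u (Finset.mem_erase.mpr ⟨hu, Finset.mem_univ _⟩),
            Finsupp.single_apply, if_neg (fun h => hu h.symm)]
      rw [this, Finsupp.smul_single, smul_eq_mul]
    rw [Finset.sum_congr rfl haj]
    have hsingle : ∑ j ∈ Finset.range M,
        Finsupp.single (0 : Fin (n + 1)) (p ^ j * pDigit p j e)
        = Finsupp.single (0 : Fin (n + 1)) (∑ j ∈ Finset.range M, p ^ j * pDigit p j e) := by
      ext u
      rw [Finsupp.finset_sum_apply, Finsupp.single_apply]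
      by_cases hu : (0 : Fin (n + 1)) = u
      · rw [if_pos hu]
        apply Finset.sum_congr rfl
        intro j _
        rw [Finsupp.single_apply, if_pos hu]
      · rw [if_neg hu, Finset.sum_eq_zero]
        intro j _
        rw [Finsupp.single_apply, if_neg hu]
    rw [hsingle]
    have : ∑ j ∈ Finset.range M, p ^ j * pDigit p j e = e := by
      have := digit_sum_eq (p := p) M e he
      simpa [pDigit] using this
    rw [this]
    exact hconc
  | succ N ih =>
    intro a ha hsum
    by_cases hle : (∑ j ∈ Finset.range M, ∑ u ∈ Finset.univ.erase 0, a j u) ≤ N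
    · exact ih a ha hle
    · have hne : (∑ j ∈ Finset.range M, ∑ u ∈ Finset.univ.erase 0, a j u) ≠ 0 := by omega
      obtain ⟨j0, hj0mem, hj0ne⟩ := Finset.exists_ne_zero_of_sum_ne_zero hne
      obtain ⟨v, hvmem, hvne⟩ := Finset.exists_ne_zero_of_sum_ne_zero hj0ne
      have hj0M : j0 < M := Finset.mem_range.mp hj0mem
      have hv0 : v ≠ 0 := (Finset.mem_erase.mp hvmem).1
      have hvL : v ≠ Fin.last n := by
        intro h
        exact hvne (h ▸ (ha j0 hj0M).1)
      set s := a j0 v with hs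
      set a' : ℕ → (Fin (n + 1) →₀ ℕ) := fun j =>
        if j = j0 then (a j0).erase v + Finsupp.single (0 : Fin (n + 1)) s else a j with ha'
      have ha'j0 : a' j0 = (a j0).erase v + Finsupp.single (0 : Fin (n + 1)) s := by
        rw [ha']; simp
      have ha'ne : ∀ j, j ≠ j0 → a' j = a j := by
        intro j hj
        rw [ha']; simp [hj]
      have ha'j0v : a' j0 v = 0 := by
        rw [ha'j0, Finsupp.add_apply, Finsupp.erase_same, Finsupp.single_apply,
          if_neg (fun h => hv0 h.symm), add_zero]
      have ha'j00 : a' j0 0 = a j0 0 + s := by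
        rw [ha'j0, Finsupp.add_apply, Finsupp.erase_ne (Ne.symm hv0), Finsupp.single_eq_same]
      have ha'j0u : ∀ u, u ≠ 0 → u ≠ v → a' j0 u = a j0 u := by
        intro u hu0 huv
        rw [ha'j0, Finsupp.add_apply, Finsupp.erase_ne huv, Finsupp.single_apply,
          if_neg (fun h => hu0 h.symm), add_zero]
      have ha'valid : ∀ j, j < M → (a' j) (Fin.last n) = 0 ∧ (∑ u, a' j u) = pDigit p j e := by
        intro j hj
        by_cases hjj : j = j0
        · subst hjj
          constructor
          · rw [ha'j0u _ hL0 (fun h => hvL h.symm)]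
            exact (ha j hj).1
          · have h1 : (∑ u ∈ Finset.univ.erase v, a' j u) + a' j v = ∑ u, a' j u :=
              Finset.sum_erase_add _ _ (Finset.mem_univ _)
            have h2 : (∑ u ∈ Finset.univ.erase v, a j u) + a j v = ∑ u, a j u :=
              Finset.sum_erase_add _ _ (Finset.mem_univ _)
            have h0v : (0 : Fin (n + 1)) ∈ Finset.univ.erase v :=
              Finset.mem_erase.mpr ⟨Ne.symm hv0, Finset.mem_univ _⟩
            have h3 : (∑ u ∈ (Finset.univ.erase v).erase 0, a' j u) + a' j 0
                = ∑ u ∈ Finset.univ.erase v, a' j u :=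
              Finset.sum_erase_add _ _ h0v
            have h4 : (∑ u ∈ (Finset.univ.erase v).erase 0, a j u) + a j 0
                = ∑ u ∈ Finset.univ.erase v, a j u :=
              Finset.sum_erase_add _ _ h0v
            have h5 : ∑ u ∈ (Finset.univ.erase v).erase 0, a' j u
                = ∑ u ∈ (Finset.univ.erase v).erase 0, a j u := by
              apply Finset.sum_congr rfl
              intro u hu
              exact ha'j0u u (Finset.mem_erase.mp hu).1
                (Finset.mem_erase.mp (Finset.mem_erase.mp hu).2).1
            have h6 := (ha j hj).2
            omega
        · rw [ha'ne j hjj]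
          exact ha j hj
      have hbound : (∑ j ∈ Finset.range M, ∑ u ∈ Finset.univ.erase 0, a' j u) ≤ N := by
        have h1 : (∑ j ∈ (Finset.range M).erase j0, ∑ u ∈ Finset.univ.erase 0, a' j u)
            + (∑ u ∈ Finset.univ.erase 0, a' j0 u)
            = ∑ j ∈ Finset.range M, ∑ u ∈ Finset.univ.erase 0, a' j u :=
          Finset.sum_erase_add _ _ hj0mem
        have h2 : (∑ j ∈ (Finset.range M).erase j0, ∑ u ∈ Finset.univ.erase 0, a j u)
            + (∑ u ∈ Finset.univ.erase 0, a j0 u)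
            = ∑ j ∈ Finset.range M, ∑ u ∈ Finset.univ.erase 0, a j u :=
          Finset.sum_erase_add _ _ hj0mem
        have h3 : ∑ j ∈ (Finset.range M).erase j0, ∑ u ∈ Finset.univ.erase 0, a' j u
            = ∑ j ∈ (Finset.range M).erase j0, ∑ u ∈ Finset.univ.erase 0, a j u := by
          apply Finset.sum_congr rfl
          intro j hj
          rw [ha'ne j (Finset.mem_erase.mp hj).1]
        have h4 : (∑ u ∈ (Finset.univ.erase 0).erase v, a' j0 u) + a' j0 v
            = ∑ u ∈ Finset.univ.erase 0, a' j0 u :=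
          Finset.sum_erase_add _ _ hvmem
        have h5 : (∑ u ∈ (Finset.univ.erase 0).erase v, a j0 u) + a j0 v
            = ∑ u ∈ Finset.univ.erase 0, a j0 u :=
          Finset.sum_erase_add _ _ hvmem
        have h6 : ∑ u ∈ (Finset.univ.erase 0).erase v, a' j0 u
            = ∑ u ∈ (Finset.univ.erase 0).erase v, a j0 u := by
          apply Finset.sum_congr rfl
          intro u hu
          exact ha'j0u u (Finset.mem_erase.mp (Finset.mem_erase.mp hu).2).1
            (Finset.mem_erase.mp hu).1
        omega
      have hib := ih a' ha'valid hbound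
      set m' : Fin (n + 1) →₀ ℕ := (∑ j ∈ Finset.range M, p ^ j • a' j)
        + Finsupp.single (Fin.last n) i with hm'
      have hm'u : ∀ u, u ≠ Fin.last n → m' u = ∑ j ∈ Finset.range M, p ^ j * a' j u := by
        intro u hu
        rw [hm', Finsupp.add_apply, Finsupp.single_apply, if_neg (fun h => hu h.symm),
          add_zero, sum_smul_apply]
      have hm'L : m' (Fin.last n) = i := by
        rw [hm', Finsupp.add_apply, Finsupp.single_eq_same, sum_smul_apply,
          Finset.sum_eq_zero, zero_add]
        intro j hj
        by_cases hjj : j = j0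
        · rw [hjj, ha'j0u _ hL0 (fun h => hvL h.symm), (ha j0 hj0M).1, mul_zero]
        · rw [ha'ne j hjj, (ha j (Finset.mem_range.mp hj)).1, mul_zero]
      have hdig : ∀ j, j < M → a' j 0 < p := by
        intro j hj
        have h1 : a' j 0 ≤ ∑ u, a' j u :=
          Finset.single_le_sum (fun _ _ => Nat.zero_le _) (Finset.mem_univ _)
        rw [(ha'valid j hj).2] at h1
        have : pDigit p j e < p := Nat.mod_lt _ hp.pos
        omega
      have hm'0 : m' 0 = ∑ j ∈ Finset.range M, p ^ j * a' j 0 := hm'u 0 h0L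
      set S := p ^ j0 * s with hS
      have hSle : S ≤ m' 0 := by
        rw [hm'0]
        calc S ≤ p ^ j0 * a' j0 0 := by
              rw [hS, ha'j00]
              exact Nat.mul_le_mul_left _ (by omega)
          _ ≤ ∑ j ∈ Finset.range M, p ^ j * a' j 0 :=
              Finset.single_le_sum (f := fun j => p ^ j * a' j 0)
                (fun _ _ => Nat.zero_le _) hj0mem
      have hchoose : ¬ p ∣ (m' 0).choose (m' 0 - S) := by
        rw [Nat.choose_symm hSle, hm'0, hS]
        exact lucas_digit' hp M (fun j => a' j 0) j0 s (fun j hj => hdig j hj) hj0M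
          (by show s ≤ a' j0 0; rw [ha'j00]; omega)
      have hmove := move_monomial hp hW2 0 v (Ne.symm hv0) hvL m' hib (m' 0 - S)
        (Nat.sub_le _ _) hchoose
      rw [Nat.sub_sub_self hSle] at hmove
      have hfinal : Finsupp.single (0 : Fin (n + 1)) (m' 0 - S)
          + (Finsupp.single v S + m'.erase 0)
          = (∑ j ∈ Finset.range M, p ^ j • a j) + Finsupp.single (Fin.last n) i := by
        have hsplit' : ∀ (b : ℕ → (Fin (n + 1) →₀ ℕ)) (u : Fin (n + 1)),
            (∑ j ∈ (Finset.range M).erase j0, p ^ j * b j u) + p ^ j0 * b j0 u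
            = ∑ j ∈ Finset.range M, p ^ j * b j u :=
          fun b u => Finset.sum_erase_add _ _ hj0mem
        have hcong : ∀ u : Fin (n + 1),
            ∑ j ∈ (Finset.range M).erase j0, p ^ j * a' j u
            = ∑ j ∈ (Finset.range M).erase j0, p ^ j * a j u := by
          intro u
          apply Finset.sum_congr rfl
          intro j hj
          rw [ha'ne j (Finset.mem_erase.mp hj).1]
        ext u
        simp only [Finsupp.add_apply, Finsupp.single_apply, Finsupp.erase_apply,
          sum_smul_apply]
        by_cases hu0 : u = 0
        · rw [if_pos (show (0 : Fin (n + 1)) = u from hu0.symm),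
            if_neg (fun h : v = u => hv0 (h.trans hu0)),
            if_pos hu0,
            if_neg (fun h : Fin.last n = u => hL0 (h.trans hu0)), hu0]
          have e1 := hsplit' a' 0
          rw [← hm'0] at e1
          have e2 := hsplit' a 0
          have e3 := hcong 0
          have e6 : p ^ j0 * a' j0 0 = p ^ j0 * a j0 0 + S := by
            rw [ha'j00, Nat.mul_add, ← hS]
          omega
        · rw [if_neg (fun h : (0 : Fin (n + 1)) = u => hu0 h.symm), zero_add]
          by_cases huv : u = v
          · rw [huv, if_pos rfl, if_neg hv0,
              if_neg (fun h : Fin.last n = v => hvL h.symm), add_zero]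
            have e1 := hsplit' a' v
            rw [ha'j0v, Nat.mul_zero, add_zero] at e1
            have e2 := hsplit' a v
            have e3 := hcong v
            have e4 := hm'u v hvL
            have e7 : p ^ j0 * a j0 v = S := by rw [hS, hs]
            omega
          · rw [if_neg (fun h : v = u => huv h.symm), zero_add, if_neg hu0]
            by_cases huL : u = Fin.last n
            · rw [huL, hm'L, if_pos rfl, Finset.sum_eq_zero, zero_add]
              intro j hj
              rw [(ha j (Finset.mem_range.mp hj)).1, mul_zero]
            · rw [if_neg (fun h : Fin.last n = u => huL h.symm), add_zero]
              have e1 := hsplit' a' u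
              have e2 := hsplit' a u
              have e3 := hcong u
              have e4 := hm'u u huL
              have e6 : p ^ j0 * a' j0 u = p ^ j0 * a j0 u := by
                rw [ha'j0u u hu0 huv]
              omega
      rw [hfinal] at hmove
      exact hmove

theorem prod_monomial {ι : Type*} (s : Finset ι) (dd : ι → (Fin (n + 1) →₀ ℕ)) (cc : ι → k) :
    ∏ x ∈ s, monomial (dd x) (cc x) = monomial (∑ x ∈ s, dd x) (∏ x ∈ s, cc x) := by
  classical
  induction s using Finset.induction_on with
  | empty => simp
  | insert _ _ h ih =>
    rw [Finset.prod_insert h, Finset.sum_insert h, Finset.prod_insert h, ih, monomial_mul]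

end Extraction

/-- Let `W ⊆ V_d` be a `P`-submodule with
`W(i) = W ∩ (S^{d−i}(V₁) ⊗ zⁱ) ≠ 0` for some `0 ≤ i < d`.  Write the `p`-adic
expansion `d − i = t₀ + t₁p + ⋯ + tₘpᵐ` (`0 ≤ t_j ≤ p−1`).  Then the subspace
`S^{t₀}(V₁)·F^*(S^{t₁}(V₁))·⋯·F^{m*}(S^{tₘ}(V₁)) ⊗ zⁱ`, i.e. the span of all
products `f₀·f₁^p·⋯·fₘ^{pᵐ}·zⁱ` with `f_j ∈ S^{t_j}(V₁)`, is contained in `W`;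
equivalently, every such product lies in `W`. -/
theorem P_submodule_contains_Frobenius_span
    (k : Type) [Field k] [IsAlgClosed k] (p n d : ℕ) [CharP k p]
    (hp : 0 < p) (hn : 2 ≤ n)
    (W : Submodule k (MvPolynomial (Fin (n + 1)) k))
    (hW : IsPSubmodule d W)
    (i : ℕ) (hid : i < d)
    (hWi : ∃ f : MvPolynomial (Fin (n + 1)) k,
      f ∈ W ∧ f ≠ 0 ∧ ∀ m ∈ f.support, m (Fin.last n) = i)
    (M : ℕ) (hM : d - i < p ^ M)
    (g : ℕ → MvPolynomial (Fin (n + 1)) k)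
    (hg : ∀ j < M, IsXHomog (pDigit p j (d - i)) (g j)) :
    (∏ j ∈ Finset.range M, g j ^ p ^ j) * MvPolynomial.X (Fin.last n) ^ i ∈ W := by
  obtain ⟨hW1, hW2⟩ := hW
  have hprime : p.Prime := (CharP.char_is_prime_or_zero k p).resolve_right (by omega)
  haveI : Fact p.Prime := ⟨hprime⟩
  have h0L : (0 : Fin (n + 1)) ≠ Fin.last n := by
    intro h
    have h2 := congrArg Fin.val h
    rw [Fin.val_last] at h2
    simp at h2
    omega
  obtain ⟨f, hfW, hf0, hfz⟩ := hWi
  have hsupp : f.support.Nonempty := by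
    rw [Finset.nonempty_iff_ne_empty]
    intro h
    exact hf0 (MvPolynomial.support_eq_empty.mp h)
  obtain ⟨m0, hm0⟩ := hsupp
  have hmon := extract_monomial hW2 f.support.card f hfW le_rfl m0 hm0
  have hVd := hW1 hfW m0 hm0
  have hm0L : m0 (Fin.last n) = i := hfz m0 hm0
  have hm0sum : (∑ j ∈ Finset.univ.erase (Fin.last n), m0 j) = d - i := by
    have h1 : (∑ j ∈ Finset.univ.erase (Fin.last n), m0 j) + m0 (Fin.last n) = ∑ j, m0 j :=
      Finset.sum_erase_add _ _ (Finset.mem_univ _)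
    rw [hm0L, hVd.1] at h1
    omega
  have hconc := concentrate hprime hW2 h0L _ m0 le_rfl hmon
  rw [hm0sum, hm0L] at hconc
  have key : ∀ (aa : ℕ → (Fin (n + 1) →₀ ℕ)),
      (∀ j, j < M → (aa j) (Fin.last n) = 0 ∧ (∑ u, aa j u) = pDigit p j (d - i)) →
      monomial ((∑ j ∈ Finset.range M, p ^ j • aa j)
        + Finsupp.single (Fin.last n) i) (1 : k) ∈ W :=
    fun aa hv => distribute hprime hW2 h0L (d - i) i M hM hconc _ aa hv le_rfl
  have hpow : ∀ j ∈ Finset.range M, g j ^ p ^ j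
      = ∑ m ∈ (g j).support, monomial (p ^ j • m) (coeff m (g j) ^ p ^ j) := by
    intro j _
    conv_lhs => rw [(g j).as_sum]
    rw [sum_pow_char_pow]
    apply Finset.sum_congr rfl
    intro m _
    rw [monomial_pow]
  rw [Finset.prod_congr rfl hpow, Finset.prod_sum, Finset.sum_mul]
  apply Submodule.sum_mem
  intro phi hphi
  rw [Finset.mem_pi] at hphi
  set aa : ℕ → (Fin (n + 1) →₀ ℕ) := fun j =>
    if h : j < M then phi j (Finset.mem_range.mpr h) else 0 with haa
  have haaval : ∀ (x : {x // x ∈ Finset.range M}), aa x.1 = phi x.1 x.2 := by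
    intro x
    rw [haa]
    simp only [dif_pos (Finset.mem_range.mp x.2)]
  rw [prod_monomial, X_pow_eq_monomial, monomial_mul, mul_one]
  have hexp : (∑ x ∈ (Finset.range M).attach, p ^ (x : ℕ) • phi x x.2)
      = ∑ j ∈ Finset.range M, p ^ j • aa j := by
    rw [← Finset.sum_attach (Finset.range M) (fun j => p ^ j • aa j)]
    apply Finset.sum_congr rfl
    intro x _
    rw [haaval x]
  rw [hexp]
  have hsm : monomial ((∑ j ∈ Finset.range M, p ^ j • aa j) + Finsupp.single (Fin.last n) i)
      (∏ x ∈ (Finset.range M).attach, coeff (phi x x.2) (g x) ^ p ^ (x : ℕ))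
      = (∏ x ∈ (Finset.range M).attach, coeff (phi x x.2) (g x) ^ p ^ (x : ℕ)) •
        monomial ((∑ j ∈ Finset.range M, p ^ j • aa j) + Finsupp.single (Fin.last n) i)
          (1 : k) := by
    rw [smul_monomial, smul_eq_mul, mul_one]
  rw [hsm]
  apply W.smul_mem
  apply key
  intro j hjM
  have hh := hg j hjM (phi j (Finset.mem_range.mpr hjM)) (hphi j (Finset.mem_range.mpr hjM))
  rw [haa]
  simp only [dif_pos hjM]
  exact hh
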